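/- Let Δ be a bounded, co-bounded m-invariant set and w ∈ [m]^n with w · Δ = Δ + n. Write Δ^{(i)} = w_{i-1} ⋯ w_0 · Δ (so Δ^{(0)} = Δ and Δ^{(n)} = Δ + n). Then for every 0 ≤ i ≤ n, the set Δ^{(i)} is an (m,n)-invariant set. -/

import Mathlib

/-- The shift of a set of integers: `Δ + k`. -/
def shiftSet (Δ : Set ℤ) (k : ℤ) : Set ℤ := (· + k) '' Δ

/-- `Δ` is `k`-invariant if `Δ + k ⊆ Δ`. -/
def Invariant (k : ℤ) (Δ : Set ℤ) : Prop := shiftSet Δ k ⊆ Δ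

/-- `Δ` is bounded (has a minimum element). -/
def HasMin (Δ : Set ℤ) : Prop := ∃ a ∈ Δ, ∀ x ∈ Δ, a ≤ x

/-- `Δ` is co-bounded: contains all sufficiently large integers. -/
def CoBounded (Δ : Set ℤ) : Prop := ∃ N : ℤ, ∀ x : ℤ, N ≤ x → x ∈ Δ

/-- The `k`-generators of `Δ`: elements `a ∈ Δ` with `a - k ∉ Δ`, i.e. `Δ \ (Δ + k)`. -/
def gens (k : ℤ) (Δ : Set ℤ) : Set ℤ := Δ \ shiftSet Δ k

/-- The `(j+1)`-st smallest element of a set of integers. -/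
noncomputable def nthSmallest : ℕ → Set ℤ → ℤ
  | 0, S => sInf S
  | j+1, S => nthSmallest j (S \ {sInf S})

/-- The letter `j ∈ [m]` acts on an `m`-invariant set by removing its `(j+1)`-st
smallest `m`-generator. -/
noncomputable def letterAct (m : ℤ) (j : ℕ) (Δ : Set ℤ) : Set ℤ :=
  Δ \ {nthSmallest j (gens m Δ)}

/-- `steps m p Δ i = p_{i-1} ⋯ p_1 p_0 ⋅ Δ`: the word acts one letter at a
time, the letter `p 0` (rightmost) acting first. -/
noncomputable def steps (m : ℤ) (p : ℕ → ℕ) (Δ : Set ℤ) : ℕ → Set ℤ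
  | 0 => Δ
  | i+1 => letterAct m (p i) (steps m p Δ i)
section Aux

/-- In `ℤ`, a nonempty set that is bounded below has a minimum. -/
lemma hasMin_of_bdd (S : Set ℤ) (hne : S.Nonempty) (b : ℤ) (hb : ∀ x ∈ S, b ≤ x) :
    HasMin S := by
  classical
  obtain ⟨lb, hlb, hleast⟩ := Int.exists_least_of_bdd (P := fun z => z ∈ S)
    ⟨b, fun z hz => hb z hz⟩ hne
  exact ⟨lb, hlb, hleast⟩

lemma nth_mem : ∀ (k : ℕ) (S : Set ℤ), S.Finite → k < S.ncard → nthSmallest k S ∈ S := by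
  intro k
  induction k with
  | zero =>
    intro S hS hcard
    have hne : S.Nonempty := Set.nonempty_of_ncard_ne_zero (by omega)
    exact hne.csInf_mem hS
  | succ k ih =>
    intro S hS hcard
    have hne : S.Nonempty := Set.nonempty_of_ncard_ne_zero (by omega)
    have hmem : sInf S ∈ S := hne.csInf_mem hS
    have hS' : (S \ {sInf S}).Finite := hS.diff
    have hcard' : (S \ {sInf S}).ncard = S.ncard - 1 :=
      Set.ncard_diff_singleton_of_mem hmem
    have : nthSmallest k (S \ {sInf S}) ∈ S \ {sInf S} := ih _ hS' (by omega)
    exact this.1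

lemma gens_props (m : ℕ) (hm : 0 < m) (Δ : Set ℤ) (hI : Invariant m Δ)
    (hb : HasMin Δ) (hc : CoBounded Δ) :
    (gens m Δ).Finite ∧ m ≤ (gens m Δ).ncard := by
  obtain ⟨a, haΔ, hamin⟩ := hb
  obtain ⟨N, hN⟩ := hc
  have hmz : (0:ℤ) < m := by exact_mod_cast hm
  -- finiteness
  have hfin : (gens m Δ).Finite := by
    apply (Set.finite_Ico a (N + m)).subset
    rintro g ⟨hg, hg'⟩
    refine ⟨hamin g hg, ?_⟩
    by_contra h
    push_neg at h
    exact hg' ⟨g - m, hN _ (by omega), by ring⟩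
  refine ⟨hfin, ?_⟩
  -- for each residue r < m, the least element of Δ in that class is a generator
  have key : ∀ r : Fin m, ∃ g ∈ gens (m : ℤ) Δ, g % m = r := by
    intro r
    set S : Set ℤ := {x | x ∈ Δ ∧ x % m = (r : ℤ)} with hSdef
    have hr0 : (0:ℤ) ≤ (r:ℤ) := by positivity
    have hrm : (r:ℤ) < m := by exact_mod_cast r.2
    have hne : S.Nonempty := by
      refine ⟨(r:ℤ) + m * (max N 0), ⟨hN _ ?_, ?_⟩⟩
      · have : N ≤ max N 0 := le_max_left _ _
        nlinarith [le_max_right N 0]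
      · rw [Int.add_mul_emod_self_left]
        exact Int.emod_eq_of_lt hr0 hrm
    obtain ⟨g, hgS, hgmin⟩ := hasMin_of_bdd S hne a (fun x hx => hamin x hx.1)
    refine ⟨g, ⟨hgS.1, ?_⟩, hgS.2⟩
    rintro ⟨y, hy, hyg⟩
    simp only at hyg
    have hyS : y ∈ S := ⟨hy, by
      rw [← hgS.2, ← hyg]
      simpa using Int.add_mul_emod_self_left (a := y) (b := (m:ℤ)) (c := 1)⟩
    have := hgmin y hyS
    omega
  choose f hf1 hf2 using key
  have hinj : Function.Injective f := by
    intro r s hrs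
    have : ((r:ℕ):ℤ) = ((s:ℕ):ℤ) := by rw [← hf2 r, ← hf2 s, hrs]
    exact Fin.ext (by exact_mod_cast this)
  calc m = (Set.range f).ncard := by
          rw [← Set.image_univ, Set.ncard_image_of_injective _ hinj, Set.ncard_univ,
            Nat.card_eq_fintype_card, Fintype.card_fin]
    _ ≤ (gens (m:ℤ) Δ).ncard := by
          apply Set.ncard_le_ncard _ hfin
          rintro x ⟨r, rfl⟩; exact hf1 r

/-- One step preserves all the structure. -/
lemma letterAct_props (m : ℕ) (hm : 0 < m) (j : ℕ) (hj : j < m) (Δ : Set ℤ)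
    (hI : Invariant m Δ) (hb : HasMin Δ) (hc : CoBounded Δ) :
    Invariant m (letterAct m j Δ) ∧ HasMin (letterAct m j Δ) ∧
      CoBounded (letterAct m j Δ) := by
  obtain ⟨hfin, hcard⟩ := gens_props m hm Δ hI hb hc
  set g := nthSmallest j (gens (m:ℤ) Δ) with hg
  have hgmem : g ∈ gens (m:ℤ) Δ := nth_mem j _ hfin (lt_of_lt_of_le hj hcard)
  obtain ⟨a, haΔ, hamin⟩ := hb
  obtain ⟨N, hN⟩ := hc
  refine ⟨?_, ?_, ?_⟩
  · rintro y ⟨x, ⟨hxΔ, hxg⟩, rfl⟩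
    refine ⟨hI ⟨x, hxΔ, rfl⟩, ?_⟩
    intro hxm
    simp only [Set.mem_singleton_iff] at hxm
    exact hgmem.2 ⟨x, hxΔ, hxm⟩
  · refine hasMin_of_bdd _ ⟨max N (g+1), hN _ (le_max_left _ _), ?_⟩ a
      (fun x hx => hamin x hx.1)
    simp only [Set.mem_singleton_iff]
    omega
  · exact ⟨max N (g+1), fun x hx => ⟨hN x (le_trans (le_max_left _ _) hx),
      by simp only [Set.mem_singleton_iff]
         have := le_trans (le_max_right N (g+1)) hx; omega⟩⟩

lemma steps_antitone (m : ℤ) (p : ℕ → ℕ) (Δ : Set ℤ) :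
    ∀ i j, i ≤ j → steps m p Δ j ⊆ steps m p Δ i := by
  intro i j hij
  induction j with
  | zero => simp_all
  | succ j ih =>
    rcases Nat.lt_or_ge i (j+1) with h | h
    · exact fun x hx => ih (by omega) hx.1
    · have : i = j + 1 := by omega
      subst this; exact fun x hx => hx

lemma steps_props (m : ℕ) (hm : 0 < m) (Δ : Set ℤ)
    (hI : Invariant m Δ) (hb : HasMin Δ) (hc : CoBounded Δ) (p : ℕ → ℕ) :
    ∀ i, (∀ j < i, p j < m) →
      Invariant m (steps m p Δ i) ∧ HasMin (steps m p Δ i) ∧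
        CoBounded (steps m p Δ i) := by
  intro i
  induction i with
  | zero => exact fun _ => ⟨hI, hb, hc⟩
  | succ i ih =>
    intro hp
    obtain ⟨h1, h2, h3⟩ := ih (fun j hj => hp j (by omega))
    exact letterAct_props m hm (p i) (hp i (by omega)) _ h1 h2 h3

end Aux

theorem each_step_invariant (m n : ℕ) (hm : 0 < m) (hn : 0 < n) (Δ : Set ℤ)
    (hI : Invariant m Δ) (hb : HasMin Δ) (hc : CoBounded Δ)
    (p : ℕ → ℕ) (hp : ∀ i < n, p i < m)
    (hact : steps m p Δ n = shiftSet Δ n) :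
    ∀ i ≤ n, Invariant m (steps m p Δ i) ∧ Invariant n (steps m p Δ i) := by
  intro i hi
  constructor
  · exact (steps_props m hm Δ hI hb hc p i (fun j hj => hp j (by omega))).1
  · rintro y ⟨x, hx, rfl⟩
    have hxΔ : x ∈ Δ := steps_antitone m p Δ 0 i (by omega) hx
    have : x + n ∈ steps (m:ℤ) p Δ n := by
      rw [hact]; exact ⟨x, hxΔ, rfl⟩
    exact steps_antitone m p Δ i n hi this
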